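/- arXiv:1402.2642 — 2 statements merged into one kernel-verified Lean document; each statement's English description precedes it below -/
import Mathlib

section
/- Assume m0, m1, m2 are pairwise distinct and collinear, all lying on the affine line r. Let r⁰ be the smallest closed segment of r containing m0, m1, m2, and let r^c = r \ r⁰. Then for every x ∈ ℝ² with x ∉ {m0, m1, m2}, the TDOA map τ₂ is differentiable at x and the rank of Dτ₂(x) equals 0 if x ∈ r^c, equals 1 if x ∈ r⁰, and equals 2 if x ∉ r. -/
open Real RealInnerProductSpace

section Aux

lemma hasFDerivAt_norm_sub {E : Type*} [NormedAddCommGroup E] [InnerProductSpace ℝ E]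
    (m x : E) (h : x ≠ m) :
    HasFDerivAt (fun y => ‖y - m‖) (innerSL ℝ (‖x - m‖⁻¹ • (x - m))) x := by
  have hne : x - m ≠ 0 := sub_ne_zero.mpr h
  have hns : ‖x - m‖ ≠ 0 := norm_ne_zero_iff.mpr hne
  have h1 : HasFDerivAt (fun y : E => ‖y - m‖ ^ 2)
      (2 • (innerSL ℝ (x - m)).comp (ContinuousLinearMap.id ℝ E)) x := by
    simpa using ((hasFDerivAt_id x).sub_const m).norm_sq
  have hs : ‖x - m‖ ^ 2 ≠ 0 := pow_ne_zero 2 hns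
  have h2 := (Real.hasDerivAt_sqrt hs).comp_hasFDerivAt x h1
  have heq : ((fun x => √x) ∘ fun y : E => ‖y - m‖ ^ 2) = fun y => ‖y - m‖ := by
    funext y; simp [Function.comp, Real.sqrt_sq (norm_nonneg _)]
  rw [heq] at h2
  refine h2.congr_fderiv ?_
  symm
  ext v
  simp only [innerSL_apply_apply, ContinuousLinearMap.smul_apply, ContinuousLinearMap.coe_smul',
    Pi.smul_apply, ContinuousLinearMap.coe_comp', Function.comp_apply,
    ContinuousLinearMap.coe_id', id_eq, Real.sqrt_sq (norm_nonneg _)]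
  rw [real_inner_smul_left]
  rw [smul_eq_mul]
  field_simp
  ring

noncomputable def dmap (a b : EuclideanSpace ℝ (Fin 2)) :
    EuclideanSpace ℝ (Fin 2) →L[ℝ] ℝ × ℝ :=
  (innerSL ℝ a).prod (innerSL ℝ b)

lemma rank_E2 : Module.rank ℝ (EuclideanSpace ℝ (Fin 2)) = 2 := by
  simp [← Module.finrank_eq_rank]

lemma dmap_rank_zero : LinearMap.rank ((dmap 0 0).toLinearMap) = 0 := by
  have : (dmap 0 0).toLinearMap = 0 := by
    ext v <;> simp [dmap]
  rw [this, LinearMap.rank_zero]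

lemma dmap_rank_one (u : EuclideanSpace ℝ (Fin 2)) (hu : u ≠ 0) (α β : ℝ)
    (hab : ¬(α = 0 ∧ β = 0)) :
    LinearMap.rank ((dmap (α • u) (β • u)).toLinearMap) = 1 := by
  have hw : ((α, β) : ℝ × ℝ) ≠ 0 := by
    simp only [Prod.ext_iff, ne_eq, Prod.fst_zero, Prod.snd_zero]; tauto
  have hrange : LinearMap.range (dmap (α • u) (β • u)).toLinearMap
      = Submodule.span ℝ {((α, β) : ℝ × ℝ)} := by
    apply le_antisymm
    · rintro _ ⟨v, rfl⟩
      simp only [ContinuousLinearMap.coe_coe, dmap, ContinuousLinearMap.prod_apply,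
        innerSL_apply_apply]
      rw [Submodule.mem_span_singleton]
      exact ⟨(inner ℝ u v : ℝ), by
        rw [real_inner_smul_left, real_inner_smul_left]
        simp [Prod.ext_iff]
        constructor <;> ring⟩
    · rw [Submodule.span_singleton_le_iff_mem]
      refine ⟨(‖u‖ ^ 2)⁻¹ • u, ?_⟩
      have hn : (inner ℝ u ((‖u‖ ^ 2)⁻¹ • u) : ℝ) = 1 := by
        rw [real_inner_smul_right, real_inner_self_eq_norm_sq]
        field_simp
      simp only [ContinuousLinearMap.coe_coe, dmap, ContinuousLinearMap.prod_apply, innerSL_apply_apply]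
      rw [real_inner_smul_left, real_inner_smul_left, hn]
      simp
  rw [show (dmap (α • u) (β • u)).toLinearMap.rank
      = Module.rank ℝ (LinearMap.range (dmap (α • u) (β • u)).toLinearMap) from rfl, hrange,
    ← Module.finrank_eq_rank, finrank_span_singleton hw]
  norm_num

lemma dmap_rank_two (a b : EuclideanSpace ℝ (Fin 2)) (hab : LinearIndependent ℝ ![a, b]) :
    LinearMap.rank ((dmap a b).toLinearMap) = 2 := by
  have hinj : Function.Injective (dmap a b).toLinearMap := by
    rw [← LinearMap.ker_eq_bot]
    rw [Submodule.eq_bot_iff]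
    intro v hv
    simp only [LinearMap.mem_ker, ContinuousLinearMap.coe_coe, dmap,
      ContinuousLinearMap.prod_apply, innerSL_apply_apply, Prod.mk_eq_zero] at hv
    have hrg : Set.range ![a, b] = {a, b} := by
      simp [Matrix.range_cons, Matrix.range_empty, Set.insert_comm, Set.pair_comm]
    have hspan : Submodule.span ℝ ({a, b} : Set (EuclideanSpace ℝ (Fin 2))) = ⊤ := by
      apply Submodule.eq_top_of_finrank_eq
      rw [← hrg, finrank_span_eq_card hab]
      simp
    have : v ∈ (⊤ : Submodule ℝ (EuclideanSpace ℝ (Fin 2)))ᗮ := by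
      rw [← hspan]
      intro w hw
      rw [Submodule.mem_span_pair] at hw
      obtain ⟨c, d, rfl⟩ := hw
      rw [inner_add_left, real_inner_smul_left, real_inner_smul_left, hv.1, hv.2]
      ring
    rwa [Submodule.top_orthogonal_eq_bot, Submodule.mem_bot] at this
  rw [show (dmap a b).toLinearMap.rank
      = Module.rank ℝ (LinearMap.range (dmap a b).toLinearMap) from rfl,
    ← (LinearEquiv.ofInjective _ hinj).rank_eq, rank_E2]

lemma unit3_indep {E : Type*} [NormedAddCommGroup E] [InnerProductSpace ℝ E]
    {u v w : E} (hu : ‖u‖ = 1) (hv : ‖v‖ = 1) (hw : ‖w‖ = 1)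
    (huv : u ≠ v) (huw : u ≠ w) (hvw : v ≠ w) :
    LinearIndependent ℝ ![v - u, w - u] := by
  rw [LinearIndependent.pair_iff]
  intro c d h
  have hvu : v - u ≠ 0 := sub_ne_zero.mpr (Ne.symm huv)
  have hwu : w - u ≠ 0 := sub_ne_zero.mpr (Ne.symm huw)
  have hN : ‖v - u‖ ^ 2 ≠ 0 := pow_ne_zero 2 (norm_ne_zero_iff.mpr hvu)
  by_cases hd : d = 0
  · subst hd
    simp only [zero_smul, add_zero, smul_eq_zero] at h
    rcases h with h | h
    · exact ⟨h, rfl⟩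
    · exact absurd h hvu
  · exfalso
    have hdinv : w - u = (-c / d) • (v - u) := by
      have h' : d • (w - u) = (-c) • (v - u) := by
        linear_combination (norm := module) h
      calc w - u = d⁻¹ • (d • (w - u)) := by rw [smul_smul, inv_mul_cancel₀ hd, one_smul]
        _ = d⁻¹ • ((-c) • (v - u)) := by rw [h']
        _ = (-c / d) • (v - u) := by rw [smul_smul]; ring_nf
    set k : ℝ := -c / d with hk
    have hwk : w = u + k • (v - u) := by rw [← hdinv]; abel
    have expand : ∀ t : ℝ, ‖u + t • (v - u)‖ ^ 2
        = 1 + 2 * (t * (inner ℝ u (v - u) : ℝ)) + t ^ 2 * ‖v - u‖ ^ 2 := by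
      intro t
      rw [norm_add_sq_real, real_inner_smul_right, norm_smul, hu]
      simp only [Real.norm_eq_abs, mul_pow, sq_abs, one_pow]
    have e1 : 1 + 2 * (k * (inner ℝ u (v - u) : ℝ)) + k ^ 2 * ‖v - u‖ ^ 2 = 1 := by
      rw [← expand k, ← hwk, hw]; norm_num
    have e2 : 1 + 2 * (1 * (inner ℝ u (v - u) : ℝ)) + 1 ^ 2 * ‖v - u‖ ^ 2 = 1 := by
      rw [← expand 1]
      have h1 : u + (1 : ℝ) • (v - u) = v := by rw [one_smul]; abel
      rw [h1, hv]; norm_num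
    have hk01 : k * (k - 1) * ‖v - u‖ ^ 2 = 0 := by linear_combination e1 - k * e2
    rcases mul_eq_zero.mp hk01 with h0 | h0
    · rcases mul_eq_zero.mp h0 with h0 | h0
      · apply huw; rw [hwk, h0, zero_smul, add_zero]
      · apply hvw
        have hk1 : k = 1 := by linarith
        rw [hwk, hk1, one_smul]; abel
    · exact hN h0

lemma hull3 (c : ℝ) : convexHull ℝ ({0, 1, c} : Set ℝ) = Set.Icc (min 0 c) (max 1 c) := by
  have hlohi : min 0 c ≤ max 1 c :=
    le_trans (min_le_left _ _) (le_trans zero_le_one (le_max_left _ _))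
  apply le_antisymm
  · apply convexHull_min _ (convex_Icc _ _)
    rintro y (rfl | rfl | rfl)
    · exact ⟨min_le_left _ _, le_trans zero_le_one (le_max_left _ _)⟩
    · exact ⟨le_trans (min_le_left _ _) zero_le_one, le_max_left _ _⟩
    · exact ⟨min_le_right _ _, le_max_right _ _⟩
  · rw [← segment_eq_Icc hlohi]
    apply segment_subset_convexHull
    · rcases min_cases 0 c with ⟨h, _⟩ | ⟨h, _⟩ <;> rw [h] <;> simp
    · rcases max_cases 1 c with ⟨h, _⟩ | ⟨h, _⟩ <;> rw [h] <;> simp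

end Aux

noncomputable def tau2 (m0 m1 m2 : EuclideanSpace ℝ (Fin 2)) (x : EuclideanSpace ℝ (Fin 2)) :
    ℝ × ℝ :=
  (‖x - m1‖ - ‖x - m0‖, ‖x - m2‖ - ‖x - m0‖)

theorem stmt1 (m0 m1 m2 : EuclideanSpace ℝ (Fin 2))
    (h01 : m0 ≠ m1) (h02 : m0 ≠ m2) (h12 : m1 ≠ m2)
    (hcol : Collinear ℝ ({m0, m1, m2} : Set (EuclideanSpace ℝ (Fin 2))))
    (r : AffineSubspace ℝ (EuclideanSpace ℝ (Fin 2)))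
    (hr : r = affineSpan ℝ ({m0, m1} : Set (EuclideanSpace ℝ (Fin 2))))
    (r0 : Set (EuclideanSpace ℝ (Fin 2)))
    (hr0 : r0 = convexHull ℝ ({m0, m1, m2} : Set (EuclideanSpace ℝ (Fin 2))))
    (x : EuclideanSpace ℝ (Fin 2))
    (hx : x ∉ ({m0, m1, m2} : Set (EuclideanSpace ℝ (Fin 2)))) :
    DifferentiableAt ℝ (tau2 m0 m1 m2) x ∧
    (x ∈ (r : Set (EuclideanSpace ℝ (Fin 2))) \ r0 →
      LinearMap.rank
        ((fderiv ℝ (tau2 m0 m1 m2) x : EuclideanSpace ℝ (Fin 2) →L[ℝ] ℝ × ℝ) :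
          EuclideanSpace ℝ (Fin 2) →ₗ[ℝ] ℝ × ℝ) = 0) ∧
    (x ∈ r0 →
      LinearMap.rank
        ((fderiv ℝ (tau2 m0 m1 m2) x : EuclideanSpace ℝ (Fin 2) →L[ℝ] ℝ × ℝ) :
          EuclideanSpace ℝ (Fin 2) →ₗ[ℝ] ℝ × ℝ) = 1) ∧
    (x ∉ (r : Set (EuclideanSpace ℝ (Fin 2))) →
      LinearMap.rank
        ((fderiv ℝ (tau2 m0 m1 m2) x : EuclideanSpace ℝ (Fin 2) →L[ℝ] ℝ × ℝ) :
          EuclideanSpace ℝ (Fin 2) →ₗ[ℝ] ℝ × ℝ) = 2) := by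
  simp only [Set.mem_insert_iff, Set.mem_singleton_iff, not_or] at hx
  obtain ⟨hx0, hx1, hx2⟩ := hx
  set d : EuclideanSpace ℝ (Fin 2) := m1 - m0 with hd
  have hdne : d ≠ 0 := sub_ne_zero.mpr (Ne.symm h01)
  have hdn : ‖d‖ ≠ 0 := norm_ne_zero_iff.mpr hdne
  -- collinearity parametrization
  obtain ⟨c, hc0, hc1, hm2⟩ : ∃ c : ℝ, c ≠ 0 ∧ c ≠ 1 ∧ m2 = c • d + m0 := by
    obtain ⟨v, hv⟩ := (collinear_iff_of_mem (Set.mem_insert m0 _)).mp hcol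
    obtain ⟨t1, ht1⟩ := hv m1 (by simp)
    obtain ⟨t2, ht2⟩ := hv m2 (by simp)
    have hdv : d = t1 • v := by rw [hd, ht1]; simp [vadd_eq_add]
    have ht1ne : t1 ≠ 0 := by
      rintro rfl
      rw [zero_smul] at hdv
      exact hdne hdv
    refine ⟨t2 / t1, ?_, ?_, ?_⟩
    · rintro h
      rw [div_eq_zero_iff] at h
      rcases h with h | h
      · rw [h, zero_smul, zero_vadd] at ht2; exact h02 ht2.symm
      · exact ht1ne h
    · intro h
      rw [div_eq_one_iff_eq ht1ne] at h
      rw [h, ← ht1] at ht2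
      exact h12 (ht2.symm ▸ rfl)
    · rw [ht2, hdv, smul_smul, vadd_eq_add]
      field_simp
  -- line membership characterization
  have hmemr : ∀ y : EuclideanSpace ℝ (Fin 2),
      y ∈ (r : Set (EuclideanSpace ℝ (Fin 2))) ↔ ∃ t : ℝ, y = t • d + m0 := by
    intro y
    subst hr
    constructor
    · intro hy
      have hm0 : m0 ∈ affineSpan ℝ ({m0, m1} : Set (EuclideanSpace ℝ (Fin 2))) :=
        left_mem_affineSpan_pair ℝ m0 m1
      have hdir : y -ᵥ m0 ∈ (affineSpan ℝ ({m0, m1} : Set (EuclideanSpace ℝ (Fin 2)))).direction :=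
        AffineSubspace.vsub_mem_direction hy hm0
      rw [direction_affineSpan, vectorSpan_pair] at hdir
      rw [Submodule.mem_span_singleton] at hdir
      obtain ⟨t, ht⟩ := hdir
      refine ⟨-t, ?_⟩
      have hy2 : y = t • (m0 - m1) + m0 := by
        simp only [vsub_eq_sub] at ht
        rw [ht]; abel
      rw [hy2, hd]
      module
    · rintro ⟨t, rfl⟩
      have := AffineSubspace.smul_vsub_vadd_mem (affineSpan ℝ ({m0, m1} :
          Set (EuclideanSpace ℝ (Fin 2)))) t
        (right_mem_affineSpan_pair ℝ m0 m1) (left_mem_affineSpan_pair ℝ m0 m1)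
        (left_mem_affineSpan_pair ℝ m0 m1)
      simpa [hd, vsub_eq_sub, vadd_eq_add, AffineSubspace.mem_coe] using this
  -- hull characterization
  have hr0' : r0 = (fun t : ℝ => t • d + m0) '' Set.Icc (min 0 c) (max 1 c) := by
    have hAline : ∀ t : ℝ, (AffineMap.lineMap m0 m1 : ℝ →ᵃ[ℝ] EuclideanSpace ℝ (Fin 2)) t
        = t • d + m0 := by
      intro t
      rw [AffineMap.lineMap_apply, vsub_eq_sub, vadd_eq_add, hd]
    have himg : ({m0, m1, m2} : Set (EuclideanSpace ℝ (Fin 2)))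
        = (AffineMap.lineMap m0 m1 : ℝ →ᵃ[ℝ] EuclideanSpace ℝ (Fin 2)) '' {0, 1, c} := by
      rw [Set.image_insert_eq, Set.image_insert_eq, Set.image_singleton,
        hAline, hAline, hAline]
      have g0 : (0:ℝ) • d + m0 = m0 := by simp
      have g1 : (1:ℝ) • d + m0 = m1 := by rw [one_smul, hd]; abel
      rw [g0, g1, ← hm2]
    rw [hr0, himg, ← AffineMap.image_convexHull, hull3]
    apply Set.image_congr
    intro t _
    exact hAline t
  -- unit vector notation
  set u0 : EuclideanSpace ℝ (Fin 2) := ‖x - m0‖⁻¹ • (x - m0) with hu0def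
  set u1 : EuclideanSpace ℝ (Fin 2) := ‖x - m1‖⁻¹ • (x - m1) with hu1def
  set u2 : EuclideanSpace ℝ (Fin 2) := ‖x - m2‖⁻¹ • (x - m2) with hu2def
  have hD0 := hasFDerivAt_norm_sub m0 x hx0
  have hD1 := hasFDerivAt_norm_sub m1 x hx1
  have hD2 := hasFDerivAt_norm_sub m2 x hx2
  have hF : HasFDerivAt (tau2 m0 m1 m2) (dmap (u1 - u0) (u2 - u0)) x := by
    have h1 := HasFDerivAt.prodMk (hD1.sub hD0) (hD2.sub hD0)
    have e : dmap (u1 - u0) (u2 - u0)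
        = ((innerSL ℝ u1) - (innerSL ℝ u0)).prod ((innerSL ℝ u2) - (innerSL ℝ u0)) := by
      rw [dmap, map_sub, map_sub]
    rw [e]
    exact h1
  have hfd : fderiv ℝ (tau2 m0 m1 m2) x = dmap (u1 - u0) (u2 - u0) := hF.fderiv
  set w : EuclideanSpace ℝ (Fin 2) := ‖d‖⁻¹ • d with hwdef
  have hwne : w ≠ 0 := by
    rw [hwdef]
    exact smul_ne_zero (inv_ne_zero hdn) hdne
  -- on-line unit vector formula
  have hunit : ∀ s t : ℝ, x = s • d + m0 → s ≠ t →
      ‖x - (t • d + m0)‖⁻¹ • (x - (t • d + m0)) = ((s - t) / |s - t|) • w := by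
    intro s t hxs hst
    have hsub : x - (t • d + m0) = (s - t) • d := by rw [hxs]; module
    rw [hsub, norm_smul, hwdef]
    simp only [Real.norm_eq_abs]
    rw [mul_inv, smul_smul, smul_smul]
    congr 1
    have habs : |s - t| ≠ 0 := abs_ne_zero.mpr (sub_ne_zero.mpr hst)
    field_simp
  refine ⟨hF.differentiableAt, ?_, ?_, ?_⟩
  · -- rank 0
    rintro ⟨hxr, hxnr0⟩
    obtain ⟨s, hxs⟩ := (hmemr x).mp hxr
    have hs0 : s ≠ 0 := by rintro rfl; apply hx0; rw [hxs]; simp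
    have hs1 : s ≠ 1 := by rintro rfl; apply hx1; rw [hxs, one_smul, hd]; abel
    have hsc : s ≠ c := by rintro rfl; apply hx2; rw [hxs, hm2]
    have hsIcc : s ∉ Set.Icc (min 0 c) (max 1 c) := by
      intro h
      exact hxnr0 (hr0' ▸ ⟨s, h, hxs.symm⟩)
    rw [Set.mem_Icc, not_and_or, not_le, not_le] at hsIcc
    have hval : ∀ t : ℝ, s ≠ t → ((s - t) / |s - t|) = if t < s then 1 else -1 := by
      intro t hst
      rcases lt_or_gt_of_ne hst with h | h
      · rw [if_neg (not_lt.mpr h.le), abs_of_neg (by linarith), div_neg, div_self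
          (by intro hh; apply hst; linarith)]
      · rw [if_pos h, abs_of_pos (by linarith), div_self (by intro hh; apply hst; linarith)]
    have key : ∀ t : ℝ, s ≠ t →
        ‖x - (t • d + m0)‖⁻¹ • (x - (t • d + m0)) = (if t < s then (1:ℝ) else -1) • w := by
      intro t hst
      rw [hunit s t hxs hst, hval t hst]
    have e0 : (0:ℝ) • d + m0 = m0 := by simp
    have e1 : (1:ℝ) • d + m0 = m1 := by rw [one_smul, hd]; abel
    have hv0 := key 0 hs0; rw [e0] at hv0
    have hv1 := key 1 hs1; rw [e1] at hv1
    have hv2 := key c hsc; rw [← hm2] at hv2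
    have hsame : (if (0:ℝ) < s then (1:ℝ) else -1) = (if (1:ℝ) < s then (1:ℝ) else -1)
        ∧ (if (0:ℝ) < s then (1:ℝ) else -1) = (if c < s then (1:ℝ) else -1) := by
      rcases hsIcc with h | h
      · have h0 : ¬ (0:ℝ) < s := not_lt.mpr (le_of_lt (lt_of_lt_of_le h (min_le_left _ _)))
        have h1 : ¬ (1:ℝ) < s := not_lt.mpr (by
          have := lt_of_lt_of_le h (min_le_left 0 c); linarith)
        have hc' : ¬ c < s := not_lt.mpr (le_of_lt (lt_of_lt_of_le h (min_le_right _ _)))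
        rw [if_neg h0, if_neg h1, if_neg hc']; exact ⟨rfl, rfl⟩
      · have h1 : (1:ℝ) < s := lt_of_le_of_lt (le_max_left _ _) h
        have h0 : (0:ℝ) < s := by linarith
        have hc' : c < s := lt_of_le_of_lt (le_max_right _ _) h
        rw [if_pos h0, if_pos h1, if_pos hc']; exact ⟨rfl, rfl⟩
    have hz1 : u1 - u0 = 0 := by
      rw [hu1def, hu0def, hv1, hv0, ← hsame.1, sub_self]
    have hz2 : u2 - u0 = 0 := by
      rw [hu2def, hu0def, hv2, hv0, ← hsame.2, sub_self]
    rw [hfd, hz1, hz2]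
    exact dmap_rank_zero
  · -- rank 1
    intro hxr0
    rw [hr0'] at hxr0
    obtain ⟨s, hsIcc, hxs'⟩ := hxr0
    have hxs : x = s • d + m0 := hxs'.symm
    have hs0 : s ≠ 0 := by rintro rfl; apply hx0; rw [hxs]; simp
    have hs1 : s ≠ 1 := by rintro rfl; apply hx1; rw [hxs, one_smul, hd]; abel
    have hsc : s ≠ c := by rintro rfl; apply hx2; rw [hxs, hm2]
    rw [Set.mem_Icc] at hsIcc
    set σ : ℝ → ℝ := fun t => (s - t) / |s - t| with hσ
    have e0 : (0:ℝ) • d + m0 = m0 := by simp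
    have e1 : (1:ℝ) • d + m0 = m1 := by rw [one_smul, hd]; abel
    have hv0 : u0 = σ 0 • w := by
      rw [hu0def, ← e0]; exact hunit s 0 hxs hs0
    have hv1 : u1 = σ 1 • w := by
      rw [hu1def, ← e1]; exact hunit s 1 hxs hs1
    have hv2 : u2 = σ c • w := by
      rw [hu2def, hm2]; exact hunit s c hxs hsc
    have hσval : ∀ t : ℝ, s ≠ t → (t < s → σ t = 1) ∧ (s < t → σ t = -1) := by
      intro t hst
      constructor
      · intro h
        rw [hσ]; simp only
        rw [abs_of_pos (by linarith), div_self (by intro hh; apply hst; linarith)]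
      · intro h
        rw [hσ]; simp only
        rw [abs_of_neg (by linarith), div_neg, div_self (by intro hh; apply hst; linarith)]
    have hz1 : u1 - u0 = (σ 1 - σ 0) • w := by rw [hv1, hv0, sub_smul]
    have hz2 : u2 - u0 = (σ c - σ 0) • w := by rw [hv2, hv0, sub_smul]
    rw [hfd, hz1, hz2]
    apply dmap_rank_one w hwne
    rintro ⟨ha, hb⟩
    have ha' : σ 1 = σ 0 := by linarith [sub_eq_zero.mp ha]
    have hb' : σ c = σ 0 := by linarith [sub_eq_zero.mp hb]
    rcases lt_or_gt_of_ne hs0 with h | h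
    · -- s < 0
      have h00 : σ 0 = -1 := (hσval 0 hs0).2 h
      have h11 : σ 1 = -1 := by rw [ha', h00]
      have hcc : σ c = -1 := by rw [hb', h00]
      -- then s < c must hold, else σ c = 1
      have hsc' : s < c := by
        rcases lt_or_gt_of_ne hsc with h' | h'
        · exact h'
        · exfalso
          have := (hσval c hsc).1 h'
          rw [hcc] at this; norm_num at this
      have : min 0 c ≤ s := hsIcc.1
      rcases le_or_gt 0 c with hc' | hc'
      · rw [min_eq_left hc'] at this; linarith
      · rw [min_eq_right hc'.le] at this; linarith
    · -- 0 < s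
      have h00 : σ 0 = 1 := (hσval 0 hs0).1 h
      have h11 : σ 1 = 1 := by rw [ha', h00]
      have hcc : σ c = 1 := by rw [hb', h00]
      have hs1' : 1 < s := by
        rcases lt_or_gt_of_ne hs1 with h' | h'
        · exfalso
          have := (hσval 1 hs1).2 h'
          rw [h11] at this; norm_num at this
        · exact h'
      have hsc' : c < s := by
        rcases lt_or_gt_of_ne hsc with h' | h'
        · exfalso
          have := (hσval c hsc).2 h'
          rw [hcc] at this; norm_num at this
        · exact h'
      have : s ≤ max 1 c := hsIcc.2
      rcases le_or_gt 1 c with hc' | hc'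
      · rw [max_eq_right hc'] at this; linarith
      · rw [max_eq_left hc'.le] at this; linarith
  · -- rank 2
    intro hxr
    have hm0r : m0 ∈ r := by rw [hr]; exact left_mem_affineSpan_pair ℝ m0 m1
    have hm1r : m1 ∈ r := by rw [hr]; exact right_mem_affineSpan_pair ℝ m0 m1
    have hm2r : m2 ∈ r := (hmemr m2).mpr ⟨c, hm2⟩
    have hnepq : ∀ p q : EuclideanSpace ℝ (Fin 2), p ∈ r → q ∈ r → p ≠ q → x ≠ p → x ≠ q →
        ‖x - p‖⁻¹ • (x - p) ≠ ‖x - q‖⁻¹ • (x - q) := by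
      intro p q hp hq hpq hxp hxq heq
      apply hxr
      set a := ‖x - p‖ with hadef
      set b := ‖x - q‖ with hbdef
      have ha : a ≠ 0 := norm_ne_zero_iff.mpr (sub_ne_zero.mpr hxp)
      have hb : b ≠ 0 := norm_ne_zero_iff.mpr (sub_ne_zero.mpr hxq)
      have h2 : b • (x - p) = a • (x - q) := by
        have h3 := congrArg (fun z => (a * b) • z) heq
        simp only [smul_smul] at h3
        rw [show a * b * a⁻¹ = b by field_simp, show a * b * b⁻¹ = a by field_simp] at h3
        exact h3
      by_cases hab : a = b
      · exfalso
        apply hpq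
        rw [hab] at h2
        have h4 : x - p = x - q := smul_right_injective (EuclideanSpace ℝ (Fin 2)) hb h2
        exact sub_right_injective h4
      · have hba : b - a ≠ 0 := sub_ne_zero.mpr (Ne.symm hab)
        have h4 : (b - a) • (x - q) = b • (p - q) := by
          linear_combination (norm := module) h2
        have h5 : x = ((b - a)⁻¹ * b) • (p - q) + q := by
          have h6 := congrArg (fun z => (b - a)⁻¹ • z) h4
          simp only [smul_smul] at h6
          rw [inv_mul_cancel₀ hba, one_smul] at h6
          rw [← h6]
          abel
        rw [h5]
        have := AffineSubspace.smul_vsub_vadd_mem r ((b - a)⁻¹ * b) hp hq hq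
        simpa [vsub_eq_sub, vadd_eq_add, AffineSubspace.mem_coe] using this
    have hnorm : ∀ p : EuclideanSpace ℝ (Fin 2), x ≠ p → ‖‖x - p‖⁻¹ • (x - p)‖ = 1 := by
      intro p hp
      rw [norm_smul, norm_inv, norm_norm,
        inv_mul_cancel₀ (norm_ne_zero_iff.mpr (sub_ne_zero.mpr hp))]
    rw [hfd]
    apply dmap_rank_two
    exact unit3_indep (hnorm m0 hx0) (hnorm m1 hx1) (hnorm m2 hx2)
      (hnepq m0 m1 hm0r hm1r h01 hx0 hx1)
      (hnepq m0 m2 hm0r hm2r h02 hx0 hx2)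
      (hnepq m1 m2 hm1r hm2r h12 hx1 hx2)
end

section
/- Assume m0, m1, m2 are not collinear. Let t = (t₁, t₂) ∈ ℝ² satisfy |t₁| < d10, |t₂| < d20, |t₂ − t₁| < d21 (i.e. t lies in the interior of P₂), a(t) > 0, and b̄(t) > 0. Then the fiber {x ∈ ℝ² : τ₂(x) = t} has exactly two elements. -/
set_option maxHeartbeats 2000000

lemma esq (w : EuclideanSpace ℝ (Fin 2)) : ‖w‖^2 = w 0^2 + w 1^2 := by
  rw [EuclideanSpace.norm_eq, Real.sq_sqrt (by positivity)]
  simp [Fin.sum_univ_two, sq_abs]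

lemma einner (x y : EuclideanSpace ℝ (Fin 2)) :
    (inner ℝ x y : ℝ) = x 0 * y 0 + x 1 * y 1 := by
  simp [PiLp.inner_apply, Fin.sum_univ_two, RCLike.inner_apply, mul_comm]

lemma norm_eq_of_sq (w : EuclideanSpace ℝ (Fin 2)) (s : ℝ)
    (h : ‖w‖^2 = s^2) (hs : 0 ≤ s) : ‖w‖ = s := by
  have h1 : (‖w‖ - s) * (‖w‖ + s) = 0 := by linear_combination h
  rcases mul_eq_zero.mp h1 with h2 | h2
  · linarith
  · linarith [norm_nonneg w]

theorem det_ne_of_not_collinear (m0 m1 m2 : EuclideanSpace ℝ (Fin 2))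
    (hnc : ¬ Collinear ℝ ({m0, m1, m2} : Set (EuclideanSpace ℝ (Fin 2))))
    (u v : EuclideanSpace ℝ (Fin 2)) (hu : u = m1 - m0) (hv : v = m2 - m0) :
    u 0 * v 1 - u 1 * v 0 ≠ 0 := by
  intro hD
  apply hnc
  rcases eq_or_ne u 0 with hu0 | hu0
  · have hm1 : m1 = m0 := by
      have h : m1 - m0 = 0 := hu ▸ hu0
      exact sub_eq_zero.mp h
    rw [collinear_iff_of_mem (Set.mem_insert m0 _)]
    refine ⟨v, ?_⟩
    rintro p (rfl | rfl | rfl)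
    · exact ⟨0, by simp⟩
    · exact ⟨0, by simp [hm1]⟩
    · exact ⟨1, by simp [hv]⟩
  · have hexists : ∃ c : ℝ, v = c • u := by
      rcases eq_or_ne (u 0) 0 with h0 | h0
      · have h1 : u 1 ≠ 0 := by
          intro h1; apply hu0; ext i; fin_cases i <;> simp [h0, h1]
        refine ⟨v 1 / u 1, ?_⟩
        ext i
        fin_cases i <;> simp [PiLp.smul_apply, smul_eq_mul]
        · field_simp
          nlinarith [hD]
        · field_simp
      · refine ⟨v 0 / u 0, ?_⟩
        ext i
        fin_cases i <;> simp [PiLp.smul_apply, smul_eq_mul]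
        · field_simp
        · field_simp
          nlinarith [hD]
    obtain ⟨c, hc⟩ := hexists
    rw [collinear_iff_of_mem (Set.mem_insert m0 _)]
    refine ⟨u, ?_⟩
    rintro p (rfl | rfl | rfl)
    · exact ⟨0, by simp⟩
    · exact ⟨1, by simp [hu]⟩
    · exact ⟨c, by rw [← hc]; simp [hv]⟩

theorem stmt14 (m0 m1 m2 : EuclideanSpace ℝ (Fin 2))
    (hnc : ¬ Collinear ℝ ({m0, m1, m2} : Set (EuclideanSpace ℝ (Fin 2))))
    (u v : EuclideanSpace ℝ (Fin 2)) (hu : u = m1 - m0) (hv : v = m2 - m0)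
    (d10 d20 d21 : ℝ) (hd10 : d10 = ‖u‖) (hd20 : d20 = ‖v‖) (hd21 : d21 = ‖v - u‖)
    (a : ℝ × ℝ → ℝ)
    (ha : ∀ t : ℝ × ℝ, a t = ‖t.2 • u - t.1 • v‖ ^ 2 - (u 0 * v 1 - u 1 * v 0) ^ 2)
    (bbar : ℝ × ℝ → ℝ)
    (hb : ∀ t : ℝ × ℝ,
      bbar t = (inner ℝ (t.2 • u - t.1 • v)
        ((d20 ^ 2 - t.2 ^ 2) • u - (d10 ^ 2 - t.1 ^ 2) • v) : ℝ))
    (t : ℝ × ℝ)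
    (hint : |t.1| < d10 ∧ |t.2| < d20 ∧ |t.2 - t.1| < d21)
    (hat : 0 < a t) (hbt : 0 < bbar t) :
    {x : EuclideanSpace ℝ (Fin 2) | tau2 m0 m1 m2 x = t}.encard = 2 := by
  obtain ⟨ht1, ht2, ht21⟩ := hint
  obtain ⟨t1, t2⟩ := t
  dsimp only at ht1 ht2 ht21
  have hD : u 0 * v 1 - u 1 * v 0 ≠ 0 :=
    det_ne_of_not_collinear m0 m1 m2 hnc u v hu hv
  obtain ⟨D, hDdef⟩ : ∃ x : ℝ, x = u 0 * v 1 - u 1 * v 0 := ⟨_, rfl⟩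
  rw [← hDdef] at hD
  have hnu : ‖u‖^2 = u 0^2 + u 1^2 := esq u
  have hnv : ‖v‖^2 = v 0^2 + v 1^2 := esq v
  have hnvu : ‖v - u‖^2 = (v 0 - u 0)^2 + (v 1 - u 1)^2 := by
    rw [esq (v - u)]; simp
  have hd10sq : d10^2 = u 0^2 + u 1^2 := by rw [hd10, hnu]
  have hd20sq : d20^2 = v 0^2 + v 1^2 := by rw [hd20, hnv]
  have hd21sq : d21^2 = (v 0 - u 0)^2 + (v 1 - u 1)^2 := by rw [hd21, hnvu]
  obtain ⟨A, hAdef⟩ : ∃ x : ℝ, x = u 0^2 + u 1^2 - t1^2 := ⟨_, rfl⟩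
  obtain ⟨B, hBdef⟩ : ∃ x : ℝ, x = v 0^2 + v 1^2 - t2^2 := ⟨_, rfl⟩
  obtain ⟨Cc, hCdef⟩ : ∃ x : ℝ, x = (v 0 - u 0)^2 + (v 1 - u 1)^2 - (t2 - t1)^2 := ⟨_, rfl⟩
  have hA : 0 < A := by
    obtain ⟨h1, h2⟩ := abs_lt.mp ht1
    rw [hAdef]
    nlinarith only [sq_lt_sq' h1 h2, hd10sq]
  have hB : 0 < B := by
    obtain ⟨h1, h2⟩ := abs_lt.mp ht2
    rw [hBdef]
    nlinarith only [sq_lt_sq' h1 h2, hd20sq]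
  have hC : 0 < Cc := by
    obtain ⟨h1, h2⟩ := abs_lt.mp ht21
    rw [hCdef]
    nlinarith only [sq_lt_sq' h1 h2, hd21sq]
  obtain ⟨aa, haadef⟩ : ∃ x : ℝ, x = a (t1, t2) := ⟨_, rfl⟩
  rw [← haadef] at hat
  obtain ⟨bb, hbbdef⟩ : ∃ x : ℝ, x = bbar (t1, t2) := ⟨_, rfl⟩
  rw [← hbbdef] at hbt
  obtain ⟨cc, hccdef⟩ : ∃ x : ℝ, x = ((B*u 0 - A*v 0)^2 + (B*u 1 - A*v 1)^2)/4 := ⟨_, rfl⟩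
  have haa : aa = (t2*u 0 - t1*v 0)^2 + (t2*u 1 - t1*v 1)^2 - D^2 := by
    rw [haadef, ha (t1, t2)]
    rw [esq (((t1, t2).2 : ℝ) • u - ((t1, t2).1 : ℝ) • v)]
    simp only [PiLp.sub_apply, PiLp.smul_apply, smul_eq_mul]
    rw [hDdef]
  have hbb : bb = (t2*u 0 - t1*v 0)*(B*u 0 - A*v 0) + (t2*u 1 - t1*v 1)*(B*u 1 - A*v 1) := by
    rw [hbbdef, hb (t1, t2), einner]
    simp only [PiLp.sub_apply, PiLp.smul_apply, smul_eq_mul]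
    rw [hd10sq, hd20sq, hAdef, hBdef]
  have hcc : 0 < cc := by
    rw [hccdef]
    rcases lt_or_ge 0 (((B*u 0 - A*v 0)^2 + (B*u 1 - A*v 1)^2)/4) with h | h
    · exact h
    · exfalso
      have h2 : B*u 0 - A*v 0 = 0 := by
        nlinarith only [sq_nonneg (B*u 0 - A*v 0), sq_nonneg (B*u 1 - A*v 1), h]
      have h3 : B*u 1 - A*v 1 = 0 := by
        nlinarith only [sq_nonneg (B*u 0 - A*v 0), sq_nonneg (B*u 1 - A*v 1), h]
      have h4 : B * D = 0 := by
        rw [hDdef]; linear_combination v 1 * h2 - v 0 * h3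
      rcases mul_eq_zero.mp h4 with h5 | h5
      · linarith
      · exact hD h5
  have hDelta : bb^2 - 4*aa*cc = D^2*(A*B*Cc) := by
    rw [haa, hbb, hccdef, hAdef, hBdef, hCdef, hDdef]
    ring
  have hDsq : 0 < D^2 := lt_of_le_of_ne (sq_nonneg D) (Ne.symm (pow_ne_zero 2 hD))
  have hDeltapos : 0 < bb^2 - 4*aa*cc := by
    rw [hDelta]; exact mul_pos hDsq (mul_pos (mul_pos hA hB) hC)
  obtain ⟨S, hSdef⟩ : ∃ x : ℝ, x = Real.sqrt (bb^2 - 4*aa*cc) := ⟨_, rfl⟩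
  have hS2 : S^2 = bb^2 - 4*aa*cc := by rw [hSdef]; exact Real.sq_sqrt hDeltapos.le
  have hSpos : 0 < S := by rw [hSdef]; exact Real.sqrt_pos.mpr hDeltapos
  have hSlt : S < bb := by
    nlinarith only [hS2, hSpos, hbt, hat, hcc]
  obtain ⟨r1, hr1def⟩ : ∃ x : ℝ, x = (bb - S)/(2*aa) := ⟨_, rfl⟩
  obtain ⟨r2, hr2def⟩ : ∃ x : ℝ, x = (bb + S)/(2*aa) := ⟨_, rfl⟩
  have haa0 : aa ≠ 0 := ne_of_gt hat
  have hkeyS : ∀ r : ℝ, (2*aa*r - (bb - S)) * (2*aa*r - (bb + S))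
      = 4*aa*(aa*r^2 - bb*r + cc) := by
    intro r
    linear_combination -hS2
  have hfac : ∀ r : ℝ, aa*r^2 - bb*r + cc = 0 ↔ (r = r1 ∨ r = r2) := by
    intro r
    constructor
    · intro h
      have h2 : (2*aa*r - (bb - S)) * (2*aa*r - (bb + S)) = 0 := by
        rw [hkeyS r, h]; ring
      rcases mul_eq_zero.mp h2 with h3 | h3
      · left; rw [hr1def]; field_simp; linarith only [h3]
      · right; rw [hr2def]; field_simp; linarith only [h3]
    · have base : ∀ s : ℝ, 2*aa*s = bb - S ∨ 2*aa*s = bb + S → aa*s^2 - bb*s + cc = 0 := by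
        intro s hs
        have h5 : 4*aa*(aa*s^2 - bb*s + cc) = 0 := by
          rw [← hkeyS s]
          rcases hs with h | h <;> rw [h] <;> ring
        rcases mul_eq_zero.mp h5 with h | h
        · exfalso; rcases mul_eq_zero.mp h with h' | h'
          · norm_num at h'
          · exact haa0 h'
        · exact h
      rintro (h | h)
      · rw [h]; exact base r1 (Or.inl (by rw [hr1def]; field_simp))
      · rw [h]; exact base r2 (Or.inr (by rw [hr2def]; field_simp))
  have hr1r2 : r1 ≠ r2 := by
    rw [hr1def, hr2def]
    intro h
    field_simp at h
    linarith only [h, hSpos]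
  obtain ⟨P0, hP0def⟩ : ∃ x : ℝ, x = (A*v 1 - B*u 1)/(2*D) := ⟨_, rfl⟩
  obtain ⟨P1, hP1def⟩ : ∃ x : ℝ, x = (B*u 0 - A*v 0)/(2*D) := ⟨_, rfl⟩
  obtain ⟨Q0, hQ0def⟩ : ∃ x : ℝ, x = (t2*u 1 - t1*v 1)/D := ⟨_, rfl⟩
  obtain ⟨Q1, hQ1def⟩ : ∃ x : ℝ, x = (t1*v 0 - t2*u 0)/D := ⟨_, rfl⟩
  obtain ⟨Yv, hYdef⟩ : ∃ x : ℝ → EuclideanSpace ℝ (Fin 2), x = fun r => !₂[P0 + r*Q0, P1 + r*Q1] := ⟨_, rfl⟩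
  have hY0 : ∀ r : ℝ, Yv r 0 = P0 + r*Q0 := by intro r; rw [hYdef]; rfl
  have hY1 : ∀ r : ℝ, Yv r 1 = P1 + r*Q1 := by intro r; rw [hYdef]; rfl
  have hkey : ∀ r : ℝ, D^2 * ((P0 + r*Q0)^2 + (P1 + r*Q1)^2 - r^2)
      = aa*r^2 - bb*r + cc := by
    intro r
    rw [haa, hbb, hccdef, hP0def, hP1def, hQ0def, hQ1def]
    field_simp
    ring
  have hinU : ∀ r : ℝ, u 0*(P0 + r*Q0) + u 1*(P1 + r*Q1) = A/2 - r*t1 := by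
    intro r
    apply mul_left_cancel₀ hD
    rw [hP0def, hP1def, hQ0def, hQ1def]
    field_simp
    rw [hDdef]
    ring
  have hinV : ∀ r : ℝ, v 0*(P0 + r*Q0) + v 1*(P1 + r*Q1) = B/2 - r*t2 := by
    intro r
    apply mul_left_cancel₀ hD
    rw [hP0def, hP1def, hQ0def, hQ1def]
    field_simp
    rw [hDdef]
    ring
  have hroot_pos : ∀ r : ℝ, aa*r^2 - bb*r + cc = 0 → 0 < r := by
    intro r h
    by_contra hr
    push_neg at hr
    nlinarith only [sq_nonneg r, hat, hbt, hcc, mul_nonneg hat.le (sq_nonneg r),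
      mul_nonneg hbt.le (neg_nonneg.mpr hr), h]
  -- backward direction: each root gives a fiber point
  have hmem : ∀ r : ℝ, aa*r^2 - bb*r + cc = 0 → tau2 m0 m1 m2 (m0 + Yv r) = (t1, t2) := by
    intro r hq
    have hrpos := hroot_pos r hq
    have hX : (P0 + r*Q0)^2 + (P1 + r*Q1)^2 = r^2 := by
      have h := hkey r
      rw [hq] at h
      have h2 := (mul_eq_zero.mp h).resolve_left (pow_ne_zero 2 hD)
      linarith only [h2]
    have hYsq : ‖Yv r‖^2 = r^2 := by
      rw [esq (Yv r), hY0 r, hY1 r]; exact hX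
    have hnY : ‖Yv r‖ = r := norm_eq_of_sq _ _ hYsq hrpos.le
    have hYusq : ‖Yv r - u‖^2 = (r + t1)^2 := by
      rw [esq (Yv r - u)]
      simp only [PiLp.sub_apply, hY0 r, hY1 r]
      linear_combination hX - 2 * hinU r - hAdef
    have hYvsq : ‖Yv r - v‖^2 = (r + t2)^2 := by
      rw [esq (Yv r - v)]
      simp only [PiLp.sub_apply, hY0 r, hY1 r]
      linear_combination hX - 2 * hinV r - hBdef
    have hge1 : 0 ≤ r + t1 := by
      by_contra hlt
      push_neg at hlt
      have hnYu : ‖Yv r - u‖ = -(r + t1) :=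
        norm_eq_of_sq _ _ (by rw [hYusq]; ring) (by linarith)
      have htri : ‖u‖ ≤ ‖Yv r‖ + ‖Yv r - u‖ := by
        calc ‖u‖ = ‖Yv r - (Yv r - u)‖ := by rw [sub_sub_cancel]
        _ ≤ ‖Yv r‖ + ‖Yv r - u‖ := norm_sub_le _ _
      rw [hnY, hnYu] at htri
      have h5 : -t1 ≤ |t1| := neg_le_abs t1
      rw [← hd10] at htri
      linarith only [htri, h5, ht1, hrpos]
    have hge2 : 0 ≤ r + t2 := by
      by_contra hlt
      push_neg at hlt
      have hnYv : ‖Yv r - v‖ = -(r + t2) :=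
        norm_eq_of_sq _ _ (by rw [hYvsq]; ring) (by linarith)
      have htri : ‖v‖ ≤ ‖Yv r‖ + ‖Yv r - v‖ := by
        calc ‖v‖ = ‖Yv r - (Yv r - v)‖ := by rw [sub_sub_cancel]
        _ ≤ ‖Yv r‖ + ‖Yv r - v‖ := norm_sub_le _ _
      rw [hnY, hnYv] at htri
      have h5 : -t2 ≤ |t2| := neg_le_abs t2
      rw [← hd20] at htri
      linarith only [htri, h5, ht2, hrpos]
    have hnYu : ‖Yv r - u‖ = r + t1 := norm_eq_of_sq _ _ hYusq hge1
    have hnYv : ‖Yv r - v‖ = r + t2 := norm_eq_of_sq _ _ hYvsq hge2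
    have hxm0 : m0 + Yv r - m0 = Yv r := by abel
    have hxm1 : m0 + Yv r - m1 = Yv r - u := by rw [hu]; abel
    have hxm2 : m0 + Yv r - m2 = Yv r - v := by rw [hv]; abel
    simp only [tau2]
    rw [hxm0, hxm1, hxm2, hnY, hnYu, hnYv]
    simp only [Prod.mk.injEq]
    constructor <;> ring
  -- forward direction
  have hmem2 : ∀ x : EuclideanSpace ℝ (Fin 2), tau2 m0 m1 m2 x = (t1, t2) →
      x = m0 + Yv r1 ∨ x = m0 + Yv r2 := by
    intro x hx
    simp only [tau2, Prod.mk.injEq] at hx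
    obtain ⟨hx1, hx2⟩ := hx
    obtain ⟨y, hy⟩ : ∃ z : EuclideanSpace ℝ (Fin 2), z = x - m0 := ⟨_, rfl⟩
    obtain ⟨R, hR⟩ : ∃ z : ℝ, z = ‖y‖ := ⟨_, rfl⟩
    have hxm1 : x - m1 = y - u := by rw [hy, hu]; abel
    have hxm2 : x - m2 = y - v := by rw [hy, hv]; abel
    rw [hxm1, ← hy, ← hR] at hx1
    rw [hxm2, ← hy, ← hR] at hx2
    have e1 : ‖y - u‖ = R + t1 := by linarith only [hx1]
    have e2 : ‖y - v‖ = R + t2 := by linarith only [hx2]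
    have hRnn : 0 ≤ R := by rw [hR]; exact norm_nonneg y
    have sqN : y 0^2 + y 1^2 = R^2 := by rw [hR, esq y]
    have sq1 : (y 0 - u 0)^2 + (y 1 - u 1)^2 = (R + t1)^2 := by
      have h := esq (y - u)
      rw [e1] at h
      simpa [PiLp.sub_apply] using h.symm
    have sq2 : (y 0 - v 0)^2 + (y 1 - v 1)^2 = (R + t2)^2 := by
      have h := esq (y - v)
      rw [e2] at h
      simpa [PiLp.sub_apply] using h.symm
    have l1 : u 0 * y 0 + u 1 * y 1 = A/2 - R*t1 := by
      linear_combination (-1/2 : ℝ) * sq1 + (1/2 : ℝ) * sqN - (1/2 : ℝ) * hAdef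
    have l2 : v 0 * y 0 + v 1 * y 1 = B/2 - R*t2 := by
      linear_combination (-1/2 : ℝ) * sq2 + (1/2 : ℝ) * sqN - (1/2 : ℝ) * hBdef
    have hy0 : y 0 = P0 + R*Q0 := by
      apply mul_left_cancel₀ hD
      have hexp : D * (P0 + R*Q0) = (A*v 1 - B*u 1)/2 + R*(t2*u 1 - t1*v 1) := by
        rw [hP0def, hQ0def]; field_simp
      rw [hexp, hDdef]
      linear_combination v 1 * l1 - u 1 * l2
    have hy1 : y 1 = P1 + R*Q1 := by
      apply mul_left_cancel₀ hD
      have hexp : D * (P1 + R*Q1) = (B*u 0 - A*v 0)/2 + R*(t1*v 0 - t2*u 0) := by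
        rw [hP1def, hQ1def]; field_simp
      rw [hexp, hDdef]
      linear_combination u 0 * l2 - v 0 * l1
    have hq : aa*R^2 - bb*R + cc = 0 := by
      rw [← hkey R]
      have h : (P0 + R*Q0)^2 + (P1 + R*Q1)^2 - R^2 = 0 := by
        rw [← hy0, ← hy1]
        linear_combination sqN
      rw [h]; ring
    have hxy : x = m0 + y := by rw [hy]; abel
    have hyY : y = Yv R := by
      ext i
      fin_cases i
      · exact hy0.trans (hY0 R).symm
      · exact hy1.trans (hY1 R).symm
    rcases (hfac R).mp hq with h | h
    · left; rw [hxy, hyY, h]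
    · right; rw [hxy, hyY, h]
  have hset : {x : EuclideanSpace ℝ (Fin 2) | tau2 m0 m1 m2 x = (t1, t2)}
      = {m0 + Yv r1, m0 + Yv r2} := by
    ext x
    simp only [Set.mem_setOf_eq, Set.mem_insert_iff, Set.mem_singleton_iff]
    constructor
    · exact hmem2 x
    · rintro (rfl | rfl)
      · exact hmem r1 ((hfac r1).mpr (Or.inl rfl))
      · exact hmem r2 ((hfac r2).mpr (Or.inr rfl))
  rw [hset]
  have hne : m0 + Yv r1 ≠ m0 + Yv r2 := by
    intro h
    have h2 : Yv r1 = Yv r2 := add_left_cancel h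
    have h0 : Yv r1 0 = Yv r2 0 := by rw [h2]
    have h1 : Yv r1 1 = Yv r2 1 := by rw [h2]
    rw [hY0 r1, hY0 r2] at h0
    rw [hY1 r1, hY1 r2] at h1
    have hQ0z : Q0 = 0 := by
      have hm : (r1 - r2)*Q0 = 0 := by linear_combination h0
      rcases mul_eq_zero.mp hm with h' | h'
      · exact absurd (sub_eq_zero.mp h') hr1r2
      · exact h'
    have hQ1z : Q1 = 0 := by
      have hm : (r1 - r2)*Q1 = 0 := by linear_combination h1
      rcases mul_eq_zero.mp hm with h' | h'
      · exact absurd (sub_eq_zero.mp h') hr1r2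
      · exact h'
    have e1 : t2*u 1 - t1*v 1 = 0 := by
      have h' := hQ0def.symm.trans hQ0z
      rcases div_eq_zero_iff.mp h' with h'' | h''
      · exact h''
      · exact absurd h'' hD
    have e2 : t1*v 0 - t2*u 0 = 0 := by
      have h' := hQ1def.symm.trans hQ1z
      rcases div_eq_zero_iff.mp h' with h'' | h''
      · exact h''
      · exact absurd h'' hD
    have haneg : aa = -D^2 := by
      rw [haa]
      linear_combination (t2*u 1 - t1*v 1) * e1 - (t2*u 0 - t1*v 0) * e2
    linarith only [hat, hDsq, haneg]
  rw [Set.encard_pair hne]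
end
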